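/- Every eigenfunction φ ∈ 𝓛^⊥ of U satisfies Uφ = -Sφ; consequently, if λ is an eigenvalue of U restricted to 𝓛^⊥ then λ ∈ {±1}, with ker(I - U|_{𝓛^⊥}) = ker(d_A) ∩ ker(I + S) and ker(I + U|_{𝓛^⊥}) = ker(d_A) ∩ ker(I - S). -/

import Mathlib

open ContinuousLinearMap

theorem stmt19 {K₁ K₂ : Type*}
    [NormedAddCommGroup K₁] [InnerProductSpace ℂ K₁] [FiniteDimensional ℂ K₁]
    [NormedAddCommGroup K₂] [InnerProductSpace ℂ K₂] [FiniteDimensional ℂ K₂]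
    (S : K₂ →L[ℂ] K₂) (hS : IsSelfAdjoint S) (hSu : S ∈ unitary (K₂ →L[ℂ] K₂))
    (dA : K₂ →L[ℂ] K₁) (h : dA ∘L adjoint dA = 1)
    (dB : K₂ →L[ℂ] K₁) (hdB : dB = dA ∘L S)
    (U : K₂ →L[ℂ] K₂) (hU : U = S ∘L ((2:ℂ) • (adjoint dA ∘L dA) - 1)) :
    (∀ φ : K₂, dA φ = 0 → dB φ = 0 → ∀ lam : ℂ, φ ≠ 0 → U φ = lam • φ →
        U φ = -(S φ)) ∧
    (∀ lam : ℂ, (∃ φ : K₂, dA φ = 0 ∧ dB φ = 0 ∧ φ ≠ 0 ∧ U φ = lam • φ) →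
        lam = 1 ∨ lam = -1) ∧
    {φ : K₂ | (dA φ = 0 ∧ dB φ = 0) ∧ U φ = φ}
      = {φ : K₂ | dA φ = 0 ∧ φ + S φ = 0} ∧
    {φ : K₂ | (dA φ = 0 ∧ dB φ = 0) ∧ U φ = -φ}
      = {φ : K₂ | dA φ = 0 ∧ φ - S φ = 0} := by
  have hS2 : ∀ x : K₂, S (S x) = x := by
    intro x
    have h1 : (star S * S) x = x := by rw [hSu.1]; rfl
    rwa [hS.star_eq, ContinuousLinearMap.mul_apply] at h1
  have key : ∀ φ : K₂, dA φ = 0 → U φ = -(S φ) := by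
    intro φ hφ
    rw [hU]
    simp [ContinuousLinearMap.comp_apply, sub_apply, smul_apply, hφ]
  refine ⟨fun φ hA _ _ _ _ => key φ hA, ?_, ?_, ?_⟩
  · rintro lam ⟨φ, hA, _, hφ0, hEig⟩
    have h1 : lam • φ = -(S φ) := by rw [← hEig, key φ hA]
    have h2 : lam • S φ = -φ := by
      have := congrArg S h1
      rw [map_smul, map_neg, hS2] at this
      exact this
    have h3 : (lam * lam) • φ = φ := by
      calc (lam * lam) • φ = lam • (lam • φ) := by rw [mul_smul]
      _ = lam • (-(S φ)) := by rw [h1]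
      _ = -(lam • S φ) := by rw [smul_neg]
      _ = φ := by rw [h2, neg_neg]
    have h4 : lam * lam = 1 := by
      by_contra hne
      have : (lam * lam - 1) • φ = 0 := by rw [sub_smul, h3, one_smul, sub_self]
      rcases smul_eq_zero.mp this with hl | hp
      · exact hne (by linear_combination hl)
      · exact hφ0 hp
    exact mul_self_eq_one_iff.mp h4
  · ext φ
    simp only [Set.mem_setOf_eq]
    constructor
    · rintro ⟨⟨hA, _⟩, hUφ⟩
      refine ⟨hA, ?_⟩
      have := key φ hA
      rw [hUφ] at this
      nth_rewrite 1 [this]; simp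
    · rintro ⟨hA, hsum⟩
      have hSφ : S φ = -φ := eq_neg_of_add_eq_zero_right hsum
      refine ⟨⟨hA, ?_⟩, ?_⟩
      · rw [hdB, comp_apply, hSφ, map_neg, hA, neg_zero]
      · rw [key φ hA, hSφ, neg_neg]
  · ext φ
    simp only [Set.mem_setOf_eq]
    constructor
    · rintro ⟨⟨hA, _⟩, hUφ⟩
      refine ⟨hA, ?_⟩
      have := key φ hA
      rw [hUφ] at this
      have hSφ : S φ = φ := (neg_injective this).symm
      rw [hSφ, sub_self]
    · rintro ⟨hA, hsub⟩
      have hSφ : S φ = φ := (sub_eq_zero.mp hsub).symm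
      refine ⟨⟨hA, ?_⟩, ?_⟩
      · rw [hdB, comp_apply, hSφ, hA]
      · rw [key φ hA, hSφ]
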